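/- arXiv:1106.5756 — 2 statements merged into one kernel-verified Lean document; each statement's English description precedes it below -/
import Mathlib

section
/- (Lemma 2(ii)) Let ρ be a pure 3-qubit state that is a product across the bipartition j|lm, i.e. (up to the corresponding reordering of tensor factors) ρ = |φ_j⟩⟨φ_j| ⊗ |χ_{lm}⟩⟨χ_{lm}| with φ_j ∈ ℂ² and χ_{lm} ∈ ℂ² ⊗ ℂ² unit vectors. Then the j-matricization of its full correlation tensor T_{i₁i₂i₃} = tr(ρ (σ_{i₁} ⊗ σ_{i₂} ⊗ σ_{i₃})) satisfies ‖T_{\underline{j}}‖_k ≤ √3 for every k. -/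
open Matrix BigOperators ComplexOrder

noncomputable section

/-- The three standard Pauli matrices. -/
def pauli : Fin 3 → Matrix (Fin 2) (Fin 2) ℂ :=
  ![!![0, 1; 1, 0], !![0, -Complex.I; Complex.I, 0], !![1, 0; 0, -1]]

/-- The tensor (Kronecker) product of `n` local operators, acting on
`(ℂ²)^{⊗n}` with the Hilbert space indexed by functions `Fin n → Fin 2`. -/
def tensorOp {n : ℕ} (A : Fin n → Matrix (Fin 2) (Fin 2) ℂ) :
    Matrix (Fin n → Fin 2) (Fin n → Fin 2) ℂ :=
  fun r c => ∏ j, A j (r j) (c j)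

/-- The full correlation tensor of an `n`-qubit state:
`T_{i₁⋯i_n} = tr(ρ (σ_{i₁} ⊗ ⋯ ⊗ σ_{i_n}))`. -/
def corr {n : ℕ} (ρ : Matrix (Fin n → Fin 2) (Fin n → Fin 2) ℂ)
    (f : Fin n → Fin 3) : ℝ :=
  ((ρ * tensorOp fun j => pauli (f j)).trace).re

/-- The `A`-matricization of an `n`-index tensor `v`: the real matrix whose row
index collects the indices in `A` and whose column index collects the remaining
indices. -/
def matricize {n m : ℕ} (A : Finset (Fin n)) (v : (Fin n → Fin m) → ℝ) :
    Matrix ({j // j ∈ A} → Fin m) ({j // j ∉ A} → Fin m) ℝ :=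
  fun r c => v fun j => if h : j ∈ A then r ⟨j, h⟩ else c ⟨j, h⟩

/-- The singular values of a real matrix `M`: the square roots of the
eigenvalues of `MᵀM = MᴴM`. -/
def singVals {I J : Type*} [Fintype I] [Fintype J] [DecidableEq J]
    (M : Matrix I J ℝ) : J → ℝ :=
  fun j => Real.sqrt ((Matrix.posSemidef_conjTranspose_mul_self M).1.eigenvalues j)

/-- The Ky Fan `k` norm: the maximum, over sets of `k` of the singular values,
of their sum — equivalently, the sum of the `k` largest singular values. -/
def kyFanNorm {I J : Type*} [Fintype I] [Fintype J] [DecidableEq J]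
    (k : ℕ) (M : Matrix I J ℝ) : ℝ :=
  (Finset.univ : Finset (Finset J)).sup' ⟨∅, Finset.mem_univ ∅⟩
    fun s => if s.card = k then ∑ j ∈ s, singVals M j else 0

/-- The trace norm: the sum of all singular values. -/
def traceNorm {I J : Type*} [Fintype I] [Fintype J] [DecidableEq J]
    (M : Matrix I J ℝ) : ℝ :=
  ∑ j, singVals M j

lemma trace_eq_sum_eigs {n : Type*} [Fintype n] [DecidableEq n] {A : Matrix n n ℝ}
    (hA : A.IsHermitian) : A.trace = ∑ i, hA.eigenvalues i := by
  simpa using hA.trace_eq_sum_eigenvalues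

lemma kyFan_le_traceNorm {I J : Type*} [Fintype I] [Fintype J] [DecidableEq J]
    (k : ℕ) (M : Matrix I J ℝ) : kyFanNorm k M ≤ traceNorm M := by
  apply Finset.sup'_le
  intro s _
  have h0 : ∀ j : J, 0 ≤ singVals M j := fun j => Real.sqrt_nonneg _
  split
  · exact Finset.sum_le_sum_of_subset_of_nonneg (Finset.subset_univ s)
      (fun j _ _ => h0 j)
  · exact Finset.sum_nonneg fun j _ => h0 j

lemma traceNorm_vecMulVec_le {I J : Type*} [Fintype I] [Fintype J] [DecidableEq J]
    (u : I → ℝ) (v : J → ℝ) :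
    traceNorm (vecMulVec u v) ≤ Real.sqrt ((∑ i, u i ^ 2) * (∑ j, v j ^ 2)) := by
  classical
  set M := vecMulVec u v with hM
  have hH := (Matrix.posSemidef_conjTranspose_mul_self M)
  set lam := hH.1.eigenvalues with hlam
  have hlamnn : ∀ j, 0 ≤ lam j := fun j => hH.eigenvalues_nonneg j
  -- trace of Mᴴ M
  have htr : (Mᴴ * M).trace = (∑ i, u i ^ 2) * (∑ j, v j ^ 2) := by
    rw [Finset.sum_mul_sum]
    simp only [Matrix.trace, Matrix.diag, Matrix.mul_apply, Matrix.conjTranspose_apply,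
      hM, Matrix.vecMulVec_apply, star_trivial]
    rw [Finset.sum_comm]
    apply Finset.sum_congr rfl; intro i _
    apply Finset.sum_congr rfl; intro j _
    ring
  have hsum : ∑ j, lam j = (∑ i, u i ^ 2) * (∑ j, v j ^ 2) := by
    rw [← htr, trace_eq_sum_eigs hH.1]
  have hrank : M.rank ≤ 1 := by
    rw [hM, Matrix.vecMulVec_eq (Fin 1)]
    exact (Matrix.rank_mul_le_right _ _).trans
      ((Matrix.rank_le_card_height _).trans (by simp))
  have hcard : (Finset.univ.filter fun j => lam j ≠ 0).card ≤ 1 := by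
    have h2 : Fintype.card {i // lam i ≠ 0} ≤ 1 := by
      rw [hlam]
      calc Fintype.card {i // hH.1.eigenvalues i ≠ 0}
          = (Mᴴ * M).rank := hH.1.rank_eq_card_non_zero_eigs.symm
        _ = M.rank := Matrix.rank_conjTranspose_mul_self M
        _ ≤ 1 := hrank
    rwa [Fintype.card_subtype] at h2
  have hnn : 0 ≤ (∑ i, u i ^ 2) * (∑ j, v j ^ 2) :=
    mul_nonneg (Finset.sum_nonneg fun _ _ => sq_nonneg _)
      (Finset.sum_nonneg fun _ _ => sq_nonneg _)
  have hred : traceNorm M = ∑ j ∈ Finset.univ.filter fun j => lam j ≠ 0,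
      Real.sqrt (lam j) := by
    rw [traceNorm]
    refine (Finset.sum_subset (Finset.filter_subset _ _) ?_).symm
    intro x _ hx
    simp only [Finset.mem_filter, Finset.mem_univ, true_and, not_not] at hx
    simp only [singVals]; rw [← hlam, hx, Real.sqrt_zero]
  rw [hred]
  rcases Finset.eq_empty_or_nonempty (Finset.univ.filter fun j => lam j ≠ 0) with h | ⟨j0, hj0⟩
  · rw [h]; simpa using Real.sqrt_nonneg _
  · have hsing : (Finset.univ.filter fun j => lam j ≠ 0) = {j0} := by
      apply Finset.eq_singleton_iff_unique_mem.mpr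
      exact ⟨hj0, fun x hx => Finset.card_le_one.mp hcard x hx j0 hj0⟩
    rw [hsing, Finset.sum_singleton]
    apply Real.sqrt_le_sqrt
    rw [← hsum]
    exact Finset.single_le_sum (fun j _ => hlamnn j) (Finset.mem_univ j0)

def qA (φ : Fin 2 → ℂ) (i : Fin 3) : ℂ :=
  ∑ x : Fin 2, ∑ y : Fin 2, φ x * star (φ y) * pauli i y x

def qB (χ : Fin 2 × Fin 2 → ℂ) (p : Fin 3 × Fin 3) : ℂ :=
  ∑ x : Fin 2 × Fin 2, ∑ y : Fin 2 × Fin 2,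
    χ x * star (χ y) * (pauli p.1 y.1 x.1 * pauli p.2 y.2 x.2)

def e0 : (Fin 2 × Fin 2 × Fin 2) ≃ (Fin 3 → Fin 2) where
  toFun p := ![p.1, p.2.1, p.2.2]
  invFun r := (r 0, r 1, r 2)
  left_inv p := rfl
  right_inv r := by funext i; fin_cases i <;> rfl

lemma sum_fun3 {M : Type*} [AddCommMonoid M] (g : (Fin 3 → Fin 2) → M) :
    ∑ r, g r = ∑ a : Fin 2, ∑ b : Fin 2, ∑ c : Fin 2, g ![a, b, c] := by
  rw [← Fintype.sum_equiv e0 (fun p => g ![p.1, p.2.1, p.2.2]) g (fun p => rfl)]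
  rw [Fintype.sum_prod_type]
  simp [Fintype.sum_prod_type]

set_option maxHeartbeats 1000000 in
lemma trace_factor0 (φ : Fin 2 → ℂ) (χ : Fin 2 × Fin 2 → ℂ)
    (Ψ : (Fin 3 → Fin 2) → ℂ)
    (hprod : ∀ r, Ψ r = φ (r 0) * χ (r 1, r 2))
    (f : Fin 3 → Fin 3) :
    (Matrix.vecMulVec Ψ (star Ψ) * tensorOp fun i => pauli (f i)).trace
      = qA φ (f 0) * qB χ (f 1, f 2) := by
  rw [Matrix.trace]
  simp only [Matrix.diag, Matrix.mul_apply, Matrix.vecMulVec_apply, Pi.star_apply]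
  simp only [sum_fun3]
  simp only [hprod, tensorOp, Fin.prod_univ_three, Matrix.cons_val_zero,
    Matrix.cons_val_one, Matrix.head_cons, Matrix.cons_val_two, Matrix.tail_cons,
    star_mul', Fin.sum_univ_two]
  simp only [qA, qB, Fintype.sum_prod_type, Fin.sum_univ_two]
  ring


set_option maxHeartbeats 1000000 in
lemma trace_factor1 (φ : Fin 2 → ℂ) (χ : Fin 2 × Fin 2 → ℂ)
    (Ψ : (Fin 3 → Fin 2) → ℂ)
    (hprod : ∀ r, Ψ r = φ (r 1) * χ (r 2, r 0))
    (f : Fin 3 → Fin 3) :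
    (Matrix.vecMulVec Ψ (star Ψ) * tensorOp fun i => pauli (f i)).trace
      = qA φ (f 1) * qB χ (f 2, f 0) := by
  rw [Matrix.trace]
  simp only [Matrix.diag, Matrix.mul_apply, Matrix.vecMulVec_apply, Pi.star_apply]
  simp only [sum_fun3]
  simp only [hprod, tensorOp, Fin.prod_univ_three, Matrix.cons_val_zero,
    Matrix.cons_val_one, Matrix.head_cons, Matrix.cons_val_two, Matrix.tail_cons,
    star_mul', Fin.sum_univ_two]
  simp only [qA, qB, Fintype.sum_prod_type, Fin.sum_univ_two]
  ring

set_option maxHeartbeats 1000000 in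
lemma trace_factor2 (φ : Fin 2 → ℂ) (χ : Fin 2 × Fin 2 → ℂ)
    (Ψ : (Fin 3 → Fin 2) → ℂ)
    (hprod : ∀ r, Ψ r = φ (r 2) * χ (r 0, r 1))
    (f : Fin 3 → Fin 3) :
    (Matrix.vecMulVec Ψ (star Ψ) * tensorOp fun i => pauli (f i)).trace
      = qA φ (f 2) * qB χ (f 0, f 1) := by
  rw [Matrix.trace]
  simp only [Matrix.diag, Matrix.mul_apply, Matrix.vecMulVec_apply, Pi.star_apply]
  simp only [sum_fun3]
  simp only [hprod, tensorOp, Fin.prod_univ_three, Matrix.cons_val_zero,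
    Matrix.cons_val_one, Matrix.head_cons, Matrix.cons_val_two, Matrix.tail_cons,
    star_mul', Fin.sum_univ_two]
  simp only [qA, qB, Fintype.sum_prod_type, Fin.sum_univ_two]
  ring

lemma trace_factor (j : Fin 3) (φ : Fin 2 → ℂ) (χ : Fin 2 × Fin 2 → ℂ)
    (Ψ : (Fin 3 → Fin 2) → ℂ)
    (hprod : ∀ r, Ψ r = φ (r j) * χ (r (j + 1), r (j + 2)))
    (f : Fin 3 → Fin 3) :
    (Matrix.vecMulVec Ψ (star Ψ) * tensorOp fun i => pauli (f i)).trace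
      = qA φ (f j) * qB χ (f (j + 1), f (j + 2)) := by
  fin_cases j
  · exact trace_factor0 φ χ Ψ hprod f
  · exact trace_factor1 φ χ Ψ hprod f
  · exact trace_factor2 φ χ Ψ hprod f

lemma qA_im (φ : Fin 2 → ℂ) (i : Fin 3) : (qA φ i).im = 0 := by
  fin_cases i <;>
    simp [qA, pauli, Fin.sum_univ_two, Complex.add_im, Complex.mul_im, Complex.mul_re,
      Complex.star_def, Complex.conj_re, Complex.conj_im] <;> ring

set_option maxHeartbeats 1000000 in
lemma qB_im (χ : Fin 2 × Fin 2 → ℂ) (p : Fin 3 × Fin 3) : (qB χ p).im = 0 := by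
  obtain ⟨k, l⟩ := p
  fin_cases k <;> fin_cases l <;>
    simp [qB, pauli, Fintype.sum_prod_type, Fin.sum_univ_two, Complex.add_im,
      Complex.mul_im, Complex.mul_re, Complex.star_def, Complex.conj_re,
      Complex.conj_im] <;> ring

lemma qA_sq (φ : Fin 2 → ℂ) (hφ : ∑ x, Complex.normSq (φ x) = 1) :
    ∑ i : Fin 3, (qA φ i).re ^ 2 = 1 := by
  have hN : Complex.normSq (φ 0) + Complex.normSq (φ 1) = 1 := by
    simpa [Fin.sum_univ_two] using hφ
  have key : ∑ i : Fin 3, (qA φ i).re ^ 2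
      = (Complex.normSq (φ 0) + Complex.normSq (φ 1)) ^ 2 := by
    simp [qA, pauli, Fin.sum_univ_three, Fin.sum_univ_two, Complex.add_re,
      Complex.mul_re, Complex.mul_im, Complex.star_def, Complex.conj_re,
      Complex.conj_im, Complex.normSq_apply]
    ring
  rw [key, hN, one_pow]


set_option maxHeartbeats 1000000 in
lemma qB_re00 (χ : Fin 2 × Fin 2 → ℂ) : (qB χ (0,0)).re = 2*(χ (0,1)).im*(χ (1,0)).im + 2*(χ (0,1)).re*(χ (1,0)).re + 2*(χ (0,0)).im*(χ (1,1)).im + 2*(χ (0,0)).re*(χ (1,1)).re := by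
  simp [qB, pauli, Fintype.sum_prod_type, Fin.sum_univ_two, Complex.add_re,
    Complex.mul_re, Complex.mul_im, Complex.star_def, Complex.conj_re, Complex.conj_im]
  ring

set_option maxHeartbeats 1000000 in
lemma qB_re01 (χ : Fin 2 × Fin 2 → ℂ) : (qB χ (0,1)).re = 2*(χ (0,1)).im*(χ (1,0)).re - 2*(χ (0,1)).re*(χ (1,0)).im - 2*(χ (0,0)).im*(χ (1,1)).re + 2*(χ (0,0)).re*(χ (1,1)).im := by
  simp [qB, pauli, Fintype.sum_prod_type, Fin.sum_univ_two, Complex.add_re,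
    Complex.mul_re, Complex.mul_im, Complex.star_def, Complex.conj_re, Complex.conj_im]
  ring

set_option maxHeartbeats 1000000 in
lemma qB_re02 (χ : Fin 2 × Fin 2 → ℂ) : (qB χ (0,2)).re = -2*(χ (0,1)).im*(χ (1,1)).im - 2*(χ (0,1)).re*(χ (1,1)).re + 2*(χ (0,0)).im*(χ (1,0)).im + 2*(χ (0,0)).re*(χ (1,0)).re := by
  simp [qB, pauli, Fintype.sum_prod_type, Fin.sum_univ_two, Complex.add_re,
    Complex.mul_re, Complex.mul_im, Complex.star_def, Complex.conj_re, Complex.conj_im]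
  ring

set_option maxHeartbeats 1000000 in
lemma qB_re10 (χ : Fin 2 × Fin 2 → ℂ) : (qB χ (1,0)).re = -2*(χ (0,1)).im*(χ (1,0)).re + 2*(χ (0,1)).re*(χ (1,0)).im - 2*(χ (0,0)).im*(χ (1,1)).re + 2*(χ (0,0)).re*(χ (1,1)).im := by
  simp [qB, pauli, Fintype.sum_prod_type, Fin.sum_univ_two, Complex.add_re,
    Complex.mul_re, Complex.mul_im, Complex.star_def, Complex.conj_re, Complex.conj_im]
  ring

set_option maxHeartbeats 1000000 in
lemma qB_re11 (χ : Fin 2 × Fin 2 → ℂ) : (qB χ (1,1)).re = 2*(χ (0,1)).im*(χ (1,0)).im + 2*(χ (0,1)).re*(χ (1,0)).re - 2*(χ (0,0)).im*(χ (1,1)).im - 2*(χ (0,0)).re*(χ (1,1)).re := by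
  simp [qB, pauli, Fintype.sum_prod_type, Fin.sum_univ_two, Complex.add_re,
    Complex.mul_re, Complex.mul_im, Complex.star_def, Complex.conj_re, Complex.conj_im]
  ring

set_option maxHeartbeats 1000000 in
lemma qB_re12 (χ : Fin 2 × Fin 2 → ℂ) : (qB χ (1,2)).re = 2*(χ (0,1)).im*(χ (1,1)).re - 2*(χ (0,1)).re*(χ (1,1)).im - 2*(χ (0,0)).im*(χ (1,0)).re + 2*(χ (0,0)).re*(χ (1,0)).im := by
  simp [qB, pauli, Fintype.sum_prod_type, Fin.sum_univ_two, Complex.add_re,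
    Complex.mul_re, Complex.mul_im, Complex.star_def, Complex.conj_re, Complex.conj_im]
  ring

set_option maxHeartbeats 1000000 in
lemma qB_re20 (χ : Fin 2 × Fin 2 → ℂ) : (qB χ (2,0)).re = -2*(χ (1,0)).im*(χ (1,1)).im - 2*(χ (1,0)).re*(χ (1,1)).re + 2*(χ (0,0)).im*(χ (0,1)).im + 2*(χ (0,0)).re*(χ (0,1)).re := by
  simp [qB, pauli, Fintype.sum_prod_type, Fin.sum_univ_two, Complex.add_re,
    Complex.mul_re, Complex.mul_im, Complex.star_def, Complex.conj_re, Complex.conj_im]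
  ring

set_option maxHeartbeats 1000000 in
lemma qB_re21 (χ : Fin 2 × Fin 2 → ℂ) : (qB χ (2,1)).re = 2*(χ (1,0)).im*(χ (1,1)).re - 2*(χ (1,0)).re*(χ (1,1)).im - 2*(χ (0,0)).im*(χ (0,1)).re + 2*(χ (0,0)).re*(χ (0,1)).im := by
  simp [qB, pauli, Fintype.sum_prod_type, Fin.sum_univ_two, Complex.add_re,
    Complex.mul_re, Complex.mul_im, Complex.star_def, Complex.conj_re, Complex.conj_im]
  ring

set_option maxHeartbeats 1000000 in
lemma qB_re22 (χ : Fin 2 × Fin 2 → ℂ) : (qB χ (2,2)).re = (χ (1,1)).im*(χ (1,1)).im + (χ (1,1)).re*(χ (1,1)).re - (χ (1,0)).im*(χ (1,0)).im - (χ (1,0)).re*(χ (1,0)).re - (χ (0,1)).im*(χ (0,1)).im - (χ (0,1)).re*(χ (0,1)).re + (χ (0,0)).im*(χ (0,0)).im + (χ (0,0)).re*(χ (0,0)).re := by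
  simp [qB, pauli, Fintype.sum_prod_type, Fin.sum_univ_two, Complex.add_re,
    Complex.mul_re, Complex.mul_im, Complex.star_def, Complex.conj_re, Complex.conj_im]
  ring

set_option maxHeartbeats 2000000 in
lemma qB_sq (χ : Fin 2 × Fin 2 → ℂ) (hχ : ∑ x, Complex.normSq (χ x) = 1) :
    ∑ p : Fin 3 × Fin 3, (qB χ p).re ^ 2 ≤ 3 := by
  set a := (χ (0,0)).re with ha; set b := (χ (0,0)).im with hb
  set c := (χ (0,1)).re with hc; set d := (χ (0,1)).im with hd
  set e := (χ (1,0)).re with he; set g := (χ (1,0)).im with hg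
  set h := (χ (1,1)).re with hh; set i := (χ (1,1)).im with hi
  have hN : a^2+b^2+c^2+d^2+e^2+g^2+h^2+i^2 = 1 := by
    have := hχ
    simp only [Fintype.sum_prod_type, Fin.sum_univ_two, Complex.normSq_apply,
      ← ha, ← hb, ← hc, ← hd, ← he, ← hg, ← hh, ← hi] at this
    linarith [this]
  have key : ∑ p : Fin 3 × Fin 3, (qB χ p).re ^ 2
      = 3 * (a^2+b^2+c^2+d^2+e^2+g^2+h^2+i^2)^2
        - (2*(a*e + b*g + c*h + d*i))^2 - (2*(a*g - b*e + c*i - d*h))^2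
        - (a^2+b^2+c^2+d^2-e^2-g^2-h^2-i^2)^2
        - (2*(a*c + b*d + e*h + g*i))^2 - (2*(a*d - b*c + e*i - g*h))^2
        - (a^2+b^2-c^2-d^2+e^2+g^2-h^2-i^2)^2 := by
    rw [Fintype.sum_prod_type]
    simp only [Fin.sum_univ_three]
    rw [qB_re00, qB_re01, qB_re02, qB_re10, qB_re11, qB_re12, qB_re20, qB_re21, qB_re22]
    rw [← ha, ← hb, ← hc, ← hd, ← he, ← hg, ← hh, ← hi]
    ring
  rw [hN] at key
  nlinarith [sq_nonneg (2*(a*e + b*g + c*h + d*i)), sq_nonneg (2*(a*g - b*e + c*i - d*h)),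
    sq_nonneg (a^2+b^2+c^2+d^2-e^2-g^2-h^2-i^2), sq_nonneg (2*(a*c + b*d + e*h + g*i)),
    sq_nonneg (2*(a*d - b*c + e*i - g*h)), sq_nonneg (a^2+b^2-c^2-d^2+e^2+g^2-h^2-i^2), key]

/-- Lemma 2(ii): If a pure 3-qubit state is a product across the
bipartition `j | {j+1, j+2}` (this covers all bipartitions `j|lm`, up to
reordering of factors), then the `j`-matricization of its full correlation
tensor satisfies `‖T_{j̲}‖_k ≤ √3` for every `k`. -/
theorem one_vs_two_product_three_qubit_matricization_bound
    (j : Fin 3) (φ : Fin 2 → ℂ) (χ : Fin 2 × Fin 2 → ℂ)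
    (hφ : ∑ x, Complex.normSq (φ x) = 1)
    (hχ : ∑ x, Complex.normSq (χ x) = 1)
    (Ψ : (Fin 3 → Fin 2) → ℂ)
    (hprod : ∀ r, Ψ r = φ (r j) * χ (r (j + 1), r (j + 2)))
    (ρ : Matrix (Fin 3 → Fin 2) (Fin 3 → Fin 2) ℂ)
    (hρ : ρ = Matrix.vecMulVec Ψ (star Ψ)) :
    ∀ k : ℕ, kyFanNorm k (matricize {j} (corr ρ)) ≤ Real.sqrt 3 := by
  intro k
  subst hρ
  -- the correlation tensor factorizes
  have hfac : ∀ f : Fin 3 → Fin 3,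
      corr (Matrix.vecMulVec Ψ (star Ψ)) f
        = (qA φ (f j)).re * (qB χ (f (j + 1), f (j + 2))).re := by
    intro f
    rw [corr, trace_factor j φ χ Ψ hprod f, Complex.mul_re, qA_im, qB_im]
    ring
  have hj1 : (j + 1 : Fin 3) ≠ j := by
    have : ∀ t : Fin 3, t + 1 ≠ t := by decide
    exact this j
  have hj2 : (j + 2 : Fin 3) ≠ j := by
    have : ∀ t : Fin 3, t + 2 ≠ t := by decide
    exact this j
  have hj12 : (j + 2 : Fin 3) ≠ j + 1 := by
    have : ∀ t : Fin 3, t + 2 ≠ t + 1 := by decide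
    exact this j
  have hcover : ∀ i : Fin 3, i ≠ j → i = j + 1 ∨ i = j + 2 := by
    have : ∀ t i : Fin 3, i ≠ t → i = t + 1 ∨ i = t + 2 := by decide
    exact this j
  have h1' : (j + 1 : Fin 3) ∉ ({j} : Finset (Fin 3)) := by
    simp [Finset.mem_singleton, hj1]
  have h2' : (j + 2 : Fin 3) ∉ ({j} : Finset (Fin 3)) := by
    simp [Finset.mem_singleton, hj2]
  haveI : Unique {i // i ∈ ({j} : Finset (Fin 3))} :=
    { default := ⟨j, Finset.mem_singleton_self j⟩
      uniq := by rintro ⟨a, ha⟩; simp only [Finset.mem_singleton] at ha; subst ha; rfl }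
  set u : ({i // i ∈ ({j} : Finset (Fin 3))} → Fin 3) → ℝ :=
    fun r => (qA φ (r ⟨j, Finset.mem_singleton_self j⟩)).re with hu_def
  set v : ({i // i ∉ ({j} : Finset (Fin 3))} → Fin 3) → ℝ :=
    fun c => (qB χ (c ⟨j + 1, h1'⟩, c ⟨j + 2, h2'⟩)).re with hv_def
  have hM : matricize {j} (corr (Matrix.vecMulVec Ψ (star Ψ))) = Matrix.vecMulVec u v := by
    funext r c
    rw [Matrix.vecMulVec_apply, matricize, hfac]
    rw [dif_pos (Finset.mem_singleton_self j), dif_neg h1', dif_neg h2']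
  have hu : ∑ r, u r ^ 2 = 1 := by
    have hsum := Fintype.sum_equiv
      (Equiv.funUnique {i // i ∈ ({j} : Finset (Fin 3))} (Fin 3)).symm
      (fun i : Fin 3 => (qA φ i).re ^ 2) (fun r => u r ^ 2) (fun i => rfl)
    rw [← hsum]
    exact qA_sq φ hφ
  have hv : ∑ c, v c ^ 2 ≤ 3 := by
    let E : ({i // i ∉ ({j} : Finset (Fin 3))} → Fin 3) ≃ (Fin 3 × Fin 3) :=
      { toFun := fun c => (c ⟨j + 1, h1'⟩, c ⟨j + 2, h2'⟩)
        invFun := fun p i => if i.1 = j + 1 then p.1 else p.2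
        left_inv := by
          intro c
          funext i
          have hi : i.1 ≠ j := by
            have := i.2
            simpa [Finset.mem_singleton] using this
          obtain h | h := hcover i.1 hi
          · show (if i.1 = j + 1 then c ⟨j + 1, h1'⟩ else c ⟨j + 2, h2'⟩) = c i
            rw [if_pos h]
            congr 1
            exact Subtype.ext h.symm
          · show (if i.1 = j + 1 then c ⟨j + 1, h1'⟩ else c ⟨j + 2, h2'⟩) = c i
            rw [if_neg (by rw [h]; exact hj12)]
            congr 1
            exact Subtype.ext h.symm
        right_inv := by
          intro p
          show (if (j + 1 : Fin 3) = j + 1 then p.1 else p.2,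
                if (j + 2 : Fin 3) = j + 1 then p.1 else p.2) = p
          rw [if_pos rfl, if_neg hj12] }
    have hsum := Fintype.sum_equiv E (fun c => v c ^ 2)
      (fun p : Fin 3 × Fin 3 => (qB χ p).re ^ 2) (fun c => rfl)
    rw [hsum]
    exact qB_sq χ hχ
  rw [hM]
  calc kyFanNorm k (Matrix.vecMulVec u v) ≤ traceNorm (Matrix.vecMulVec u v) :=
        kyFan_le_traceNorm k _
    _ ≤ Real.sqrt ((∑ i, u i ^ 2) * (∑ j, v j ^ 2)) := traceNorm_vecMulVec_le u v
    _ ≤ Real.sqrt 3 := by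
        apply Real.sqrt_le_sqrt
        rw [hu, one_mul]
        exact hv
end
end

section
/- Let ρ be a pure 4-qubit state that is a product across the 2-versus-2 bipartition {j,m}|{l,s}, i.e. (up to the corresponding reordering of tensor factors) ρ = |χ_{jm}⟩⟨χ_{jm}| ⊗ |χ_{ls}⟩⟨χ_{ls}| with χ_{jm}, χ_{ls} ∈ ℂ² ⊗ ℂ² unit vectors. Then the crossing {j,l}-matricization of the full correlation tensor T_{i₁i₂i₃i₄} = tr(ρ (σ_{i₁} ⊗ σ_{i₂} ⊗ σ_{i₃} ⊗ σ_{i₄})) satisfies ‖T_{\underline{\{j,l\}}}‖_k ≤ k for every k ∈ {1,…,9}. -/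
open Matrix BigOperators ComplexOrder

noncomputable section

def Contr {I J : Type*} [Fintype I] [Fintype J] (M : Matrix I J ℝ) : Prop :=
  ∀ x : J → ℝ, ∑ i, (∑ j, M i j * x j) ^ 2 ≤ ∑ j, (x j) ^ 2

theorem singVals_le_one {I J : Type*} [Fintype I] [Fintype J] [DecidableEq J]
    (M : Matrix I J ℝ) (hM : Contr M) (q : J) : singVals M q ≤ 1 := by
  set hH := (Matrix.posSemidef_conjTranspose_mul_self M).1 with hHdef
  have key : hH.eigenvalues q ≤ 1 := by
    set v : J → ℝ := ⇑(hH.eigenvectorBasis q) with hv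
    have hnorm : ‖hH.eigenvectorBasis q‖ = 1 := hH.eigenvectorBasis.orthonormal.1 q
    have hsum : ∑ i, (v i) ^ 2 = 1 := by
      have := EuclideanSpace.norm_eq (hH.eigenvectorBasis q)
      rw [hnorm] at this
      have h2 : Real.sqrt (∑ i, ‖v i‖ ^ 2) = 1 := this.symm
      have h3 : (∑ i, ‖v i‖ ^ 2) = 1 := by
        have := congrArg (fun t => t ^ 2) h2
        simpa [Real.sq_sqrt (Finset.sum_nonneg fun i _ => sq_nonneg _)] using this
      simpa [Real.norm_eq_abs, sq_abs] using h3
    have hmv : (Mᴴ * M) *ᵥ v = hH.eigenvalues q • v := hH.mulVec_eigenvectorBasis q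
    have hquad : ∑ i, v i * (((Mᴴ * M) *ᵥ v) i) = hH.eigenvalues q := by
      rw [hmv]
      simp only [Pi.smul_apply, smul_eq_mul]
      rw [show ∑ i, v i * (hH.eigenvalues q * v i) = hH.eigenvalues q * ∑ i, (v i)^2 by
        rw [Finset.mul_sum]; exact Finset.sum_congr rfl fun i _ => by ring]
      rw [hsum, mul_one]
    have hquad2 : ∑ i, v i * (((Mᴴ * M) *ᵥ v) i) = ∑ t, (∑ i, M t i * v i) ^ 2 := by
      simp only [Matrix.mulVec, Matrix.mul_apply, dotProduct, Matrix.conjTranspose_apply,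
        star_trivial]
      have expand : ∀ t : I, (∑ i, M t i * v i) ^ 2
          = ∑ x, ∑ y, v x * (M t x * M t y * v y) := by
        intro t
        rw [sq, Finset.sum_mul_sum]
        exact Finset.sum_congr rfl fun x _ => Finset.sum_congr rfl fun y _ => by ring
      calc ∑ x, v x * ∑ y, (∑ t, M t x * M t y) * v y
          = ∑ x, ∑ y, ∑ t, v x * (M t x * M t y * v y) := by
            refine Finset.sum_congr rfl fun x _ => ?_
            rw [Finset.mul_sum]
            refine Finset.sum_congr rfl fun y _ => ?_
            rw [Finset.sum_mul, Finset.mul_sum]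
        _ = ∑ x, ∑ t, ∑ y, v x * (M t x * M t y * v y) :=
            Finset.sum_congr rfl fun x _ => Finset.sum_comm
        _ = ∑ t, ∑ x, ∑ y, v x * (M t x * M t y * v y) := Finset.sum_comm
        _ = ∑ t, (∑ i, M t i * v i) ^ 2 :=
            Finset.sum_congr rfl fun t _ => (expand t).symm
    have h := hM v
    rw [← hquad2, hquad, hsum] at h
    exact h
  calc Real.sqrt (hH.eigenvalues q) ≤ Real.sqrt 1 := Real.sqrt_le_sqrt key
    _ = 1 := Real.sqrt_one

theorem kyFan_le {I J : Type*} [Fintype I] [Fintype J] [DecidableEq J]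
    (M : Matrix I J ℝ) (hM : Contr M) (k : ℕ) :
    kyFanNorm k M ≤ k := by
  apply Finset.sup'_le
  intro s _
  by_cases h : s.card = k
  · simp only [h, if_pos rfl]
    calc ∑ j ∈ s, singVals M j ≤ ∑ j ∈ s, 1 :=
          Finset.sum_le_sum fun j _ => singVals_le_one M hM j
      _ = k := by simp [h]
  · simp [h]

def kron (P Q : Matrix (Fin 2) (Fin 2) ℂ) : Matrix (Fin 2 × Fin 2) (Fin 2 × Fin 2) ℂ :=
  fun x y => P x.1 y.1 * Q x.2 y.2

lemma kron_mul (P P' Q Q' : Matrix (Fin 2) (Fin 2) ℂ) :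
    kron P Q * kron P' Q' = kron (P * P') (Q * Q') := by
  ext x y
  simp only [kron, Matrix.mul_apply, Fintype.sum_prod_type]
  rw [Finset.sum_mul_sum]
  exact Finset.sum_congr rfl fun a _ => Finset.sum_congr rfl fun b _ => by ring

def uσ (u : Fin 3 → ℝ) : Matrix (Fin 2) (Fin 2) ℂ :=
  ∑ a, (u a : ℂ) • pauli a

lemma uσ_sq (u : Fin 3 → ℝ) :
    uσ u * uσ u = ((∑ a, (u a) ^ 2 : ℝ) : ℂ) • 1 := by
  ext i j
  fin_cases i <;> fin_cases j <;>
    simp [uσ, pauli, Matrix.mul_apply, Fin.sum_univ_succ, Matrix.smul_apply,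
      Matrix.one_apply] <;>
    ring_nf <;>
    simp [Complex.I_sq, Complex.I_mul_I] <;> ring

lemma uσ_herm (u : Fin 3 → ℝ) : (uσ u)ᴴ = uσ u := by
  ext i j
  fin_cases i <;> fin_cases j <;>
    simp [uσ, pauli, Fin.sum_univ_succ, Matrix.conjTranspose_apply, Complex.ext_iff]

lemma kron_herm (P Q : Matrix (Fin 2) (Fin 2) ℂ) (hP : Pᴴ = P) (hQ : Qᴴ = Q) :
    (kron P Q)ᴴ = kron P Q := by
  ext x y
  have hp := congrFun (congrFun hP x.1) y.1
  have hq := congrFun (congrFun hQ x.2) y.2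
  simp only [Matrix.conjTranspose_apply] at hp hq ⊢
  simp only [kron, star_mul', hp, hq]

abbrev ι2 := Fin 2 × Fin 2

def qf (H : Matrix ι2 ι2 ℂ) (χ : ι2 → ℂ) : ℂ :=
  ∑ x, ∑ y, χ x * (starRingEnd ℂ) (χ y) * H y x

lemma qf_eq_inner_form (H : Matrix ι2 ι2 ℂ) (χ : ι2 → ℂ) :
    qf H χ = ∑ y, (starRingEnd ℂ) (χ y) * (H *ᵥ χ) y := by
  rw [qf, Finset.sum_comm]
  refine Finset.sum_congr rfl fun y _ => ?_
  simp only [Matrix.mulVec, dotProduct, Finset.mul_sum]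
  exact Finset.sum_congr rfl fun x _ => by ring

lemma qf_conj (H : Matrix ι2 ι2 ℂ) (hH : Hᴴ = H) (χ : ι2 → ℂ) :
    (starRingEnd ℂ) (qf H χ) = qf H χ := by
  rw [qf]
  push_cast [map_sum]
  rw [Finset.sum_comm]
  refine Finset.sum_congr rfl fun x _ => Finset.sum_congr rfl fun y _ => ?_
  have hp := congrFun (congrFun hH x) y
  simp only [Matrix.conjTranspose_apply] at hp
  simp only [_root_.map_mul, RingHom.id_apply, Complex.conj_conj]
  rw [← hp, show ∀ z : ℂ, (starRingEnd ℂ) (star z) = z from fun z => by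
    simp [Complex.star_def]]
  ring

lemma qf_real (H : Matrix ι2 ι2 ℂ) (hH : Hᴴ = H) (χ : ι2 → ℂ) : (qf H χ).im = 0 := by
  have := qf_conj H hH χ
  have h2 := congrArg Complex.im this
  simp only [Complex.conj_im] at h2
  linarith

lemma qf_smul_one (c : ℝ) (χ : ι2 → ℂ) (hχ : ∑ x, Complex.normSq (χ x) = 1) :
    qf ((c : ℂ) • 1) χ = (c : ℂ) := by
  rw [qf]
  have : ∀ x : ι2, ∑ y, χ x * (starRingEnd ℂ) (χ y) * ((c : ℂ) • (1 : Matrix ι2 ι2 ℂ)) y x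
      = (c : ℂ) * (χ x * (starRingEnd ℂ) (χ x)) := by
    intro x
    rw [Finset.sum_eq_single x]
    · simp [Matrix.smul_apply, Matrix.one_apply]; ring
    · intro y _ hy; simp [Matrix.smul_apply, Matrix.one_apply, hy]
    · simp
  rw [Finset.sum_congr rfl fun x _ => this x, ← Finset.mul_sum]
  have : ∑ x, χ x * (starRingEnd ℂ) (χ x) = 1 := by
    have : ∀ x : ι2, χ x * (starRingEnd ℂ) (χ x) = (Complex.normSq (χ x) : ℂ) := by
      intro x; rw [mul_comm, Complex.normSq_eq_conj_mul_self]
    rw [Finset.sum_congr rfl fun x _ => this x]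
    rw [← Complex.ofReal_sum, hχ, Complex.ofReal_one]
  rw [this, mul_one]

lemma sum_normSq_mulVec (H : Matrix ι2 ι2 ℂ) (hH : Hᴴ = H) (c : ℝ)
    (hsq : H * H = (c : ℂ) • 1) (χ : ι2 → ℂ) (hχ : ∑ x, Complex.normSq (χ x) = 1) :
    ∑ y, Complex.normSq ((H *ᵥ χ) y) = c := by
  set w := H *ᵥ χ with hw
  have key : ∑ y, (starRingEnd ℂ) (w y) * w y = (c : ℂ) := by
    have h1 : ∑ y, (starRingEnd ℂ) (w y) * w y = qf (Hᴴ * H) χ := by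
      rw [qf_eq_inner_form, ← Matrix.mulVec_mulVec]
      calc ∑ y, (starRingEnd ℂ) (w y) * w y
          = ∑ y, ∑ x, (starRingEnd ℂ) (H y x) * (starRingEnd ℂ) (χ x) * w y := by
            refine Finset.sum_congr rfl fun y _ => ?_
            rw [hw, Matrix.mulVec, dotProduct, map_sum, Finset.sum_mul]
            exact Finset.sum_congr rfl fun x _ => by
              rw [_root_.map_mul]
        _ = ∑ x, ∑ y, (starRingEnd ℂ) (H y x) * (starRingEnd ℂ) (χ x) * w y :=
            Finset.sum_comm
        _ = ∑ x, (starRingEnd ℂ) (χ x) * (Hᴴ *ᵥ w) x := by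
            refine Finset.sum_congr rfl fun x _ => ?_
            rw [Matrix.mulVec, dotProduct, Finset.mul_sum]
            exact Finset.sum_congr rfl fun y _ => by
              rw [Matrix.conjTranspose_apply, Complex.star_def]; ring
    rw [h1, hH, hsq, qf_smul_one c χ hχ]
  have h2 : ((∑ y, Complex.normSq (w y) : ℝ) : ℂ) = (c : ℂ) := by
    rw [Complex.ofReal_sum]
    rw [← key]
    exact Finset.sum_congr rfl fun y _ => by
      rw [Complex.normSq_eq_conj_mul_self]
  exact_mod_cast h2

lemma qf_re_abs_le (H : Matrix ι2 ι2 ℂ) (hH : Hᴴ = H) (c : ℝ) (hc : 0 ≤ c)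
    (hsq : H * H = (c : ℂ) • 1) (χ : ι2 → ℂ)
    (hχ : ∑ x, Complex.normSq (χ x) = 1) :
    |(qf H χ).re| ≤ Real.sqrt c := by
  set w := H *ᵥ χ with hw
  let χ' : EuclideanSpace ℂ ι2 := WithLp.toLp 2 χ
  let w' : EuclideanSpace ℂ ι2 := WithLp.toLp 2 w
  have hinner : (inner ℂ χ' w' : ℂ) = qf H χ := by
    rw [qf_eq_inner_form]
    rw [PiLp.inner_apply]
    exact Finset.sum_congr rfl fun y _ => by simp [χ', w', w, mul_comm]
  have hnχ : ‖χ'‖ = 1 := by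
    rw [EuclideanSpace.norm_eq]
    have : ∑ x, ‖χ' x‖ ^ 2 = 1 := by
      rw [← hχ]
      exact Finset.sum_congr rfl fun x _ => Complex.sq_norm (χ x)
    rw [this, Real.sqrt_one]
  have hnw : ‖w'‖ = Real.sqrt c := by
    rw [EuclideanSpace.norm_eq]
    congr 1
    rw [← sum_normSq_mulVec H hH c hsq χ hχ]
    exact Finset.sum_congr rfl fun x _ => Complex.sq_norm _
  calc |(qf H χ).re| ≤ ‖qf H χ‖ := Complex.abs_re_le_norm _
    _ = ‖(inner ℂ χ' w' : ℂ)‖ := by rw [hinner]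
    _ ≤ ‖χ'‖ * ‖w'‖ := norm_inner_le_norm _ _
    _ = Real.sqrt c := by rw [hnχ, hnw, one_mul]

def qfL (χ : ι2 → ℂ) : Matrix ι2 ι2 ℂ →ₗ[ℂ] ℂ where
  toFun := fun H => qf H χ
  map_add' := by
    intro H H'
    simp [qf, Matrix.add_apply, mul_add, Finset.sum_add_distrib]
  map_smul' := by
    intro z H
    simp only [qf, Matrix.smul_apply, smul_eq_mul, RingHom.id_apply, Finset.mul_sum]
    exact Finset.sum_congr rfl fun x _ => Finset.sum_congr rfl fun y _ => by ring

lemma kron_uσ_expand (u v : Fin 3 → ℝ) :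
    kron (uσ u) (uσ v) = ∑ a, ∑ b, ((u a : ℂ) * (v b : ℂ)) • kron (pauli a) (pauli b) := by
  ext x y
  simp only [kron, uσ, Finset.sum_apply, Matrix.smul_apply, Matrix.sum_apply, smul_eq_mul]
  rw [Finset.sum_mul_sum]
  exact Finset.sum_congr rfl fun a _ => Finset.sum_congr rfl fun b _ => by ring

lemma qf_kron_expand (u v : Fin 3 → ℝ) (χ : ι2 → ℂ) :
    qf (kron (uσ u) (uσ v)) χ
      = ∑ a, ∑ b, ((u a : ℂ) * (v b : ℂ)) * qf (kron (pauli a) (pauli b)) χ := by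
  have : qf (kron (uσ u) (uσ v)) χ = qfL χ (kron (uσ u) (uσ v)) := rfl
  rw [this, kron_uσ_expand, map_sum]
  refine Finset.sum_congr rfl fun a _ => ?_
  rw [map_sum]
  refine Finset.sum_congr rfl fun b _ => ?_
  rw [LinearMap.map_smul, smul_eq_mul]
  rfl

lemma kron_smul_one (c₁ c₂ : ℝ) :
    kron ((c₁ : ℂ) • 1) ((c₂ : ℂ) • 1) = (((c₁ * c₂ : ℝ)) : ℂ) • (1 : Matrix ι2 ι2 ℂ) := by
  ext x y
  simp only [kron, Matrix.smul_apply, Matrix.one_apply, smul_eq_mul, Prod.ext_iff]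
  by_cases h1 : x.1 = y.1 <;> by_cases h2 : x.2 = y.2 <;>
    simp [h1, h2] <;> push_cast <;> ring

lemma pauli_herm (a : Fin 3) : (pauli a)ᴴ = pauli a := by
  fin_cases a <;>
    · ext i j
      fin_cases i <;> fin_cases j <;>
        simp [pauli, Matrix.conjTranspose_apply, Complex.ext_iff]

/-- the 2-qubit correlation matrix -/
def corr2 (χ : ι2 → ℂ) : Matrix (Fin 3) (Fin 3) ℝ :=
  fun a b => (qf (kron (pauli a) (pauli b)) χ).re

lemma corr2_complex (χ : ι2 → ℂ) (a b : Fin 3) :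
    qf (kron (pauli a) (pauli b)) χ = ((corr2 χ a b : ℝ) : ℂ) := by
  have h := qf_real (kron (pauli a) (pauli b))
    (kron_herm _ _ (pauli_herm a) (pauli_herm b)) χ
  rw [Complex.ext_iff]
  constructor
  · rfl
  · simp [h]

lemma corr2_bilinear (χ : ι2 → ℂ) (hχ : ∑ x, Complex.normSq (χ x) = 1)
    (u v : Fin 3 → ℝ) :
    |∑ a, ∑ b, u a * v b * corr2 χ a b|
      ≤ Real.sqrt (∑ a, (u a) ^ 2) * Real.sqrt (∑ b, (v b) ^ 2) := by
  set H := kron (uσ u) (uσ v) with hH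
  have hherm : Hᴴ = H := kron_herm _ _ (uσ_herm u) (uσ_herm v)
  have hsq : H * H = (((∑ a, (u a) ^ 2) * (∑ b, (v b) ^ 2) : ℝ) : ℂ) • 1 := by
    rw [hH, kron_mul, uσ_sq, uσ_sq, kron_smul_one]
  have hre : (qf H χ).re = ∑ a, ∑ b, u a * v b * corr2 χ a b := by
    rw [hH, qf_kron_expand]
    rw [Complex.re_sum]
    refine Finset.sum_congr rfl fun a _ => ?_
    rw [Complex.re_sum]
    refine Finset.sum_congr rfl fun b _ => ?_
    rw [corr2_complex]
    push_cast
    simp [Complex.mul_re]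
  have := qf_re_abs_le H hherm ((∑ a, (u a) ^ 2) * (∑ b, (v b) ^ 2))
    (mul_nonneg (Finset.sum_nonneg fun _ _ => sq_nonneg _)
      (Finset.sum_nonneg fun _ _ => sq_nonneg _)) hsq χ hχ
  rw [hre] at this
  rwa [Real.sqrt_mul (Finset.sum_nonneg fun _ _ => sq_nonneg _)] at this

/-- contraction property of the 2-qubit correlation matrix -/
lemma corr2_contr (χ : ι2 → ℂ) (hχ : ∑ x, Complex.normSq (χ x) = 1)
    (y : Fin 3 → ℝ) :
    ∑ a, (∑ b, corr2 χ a b * y b) ^ 2 ≤ ∑ b, (y b) ^ 2 := by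
  set u : Fin 3 → ℝ := fun a => ∑ b, corr2 χ a b * y b with hu
  have h1 : ∑ a, (u a) ^ 2 = ∑ a, ∑ b, u a * y b * corr2 χ a b := by
    refine Finset.sum_congr rfl fun a _ => ?_
    rw [sq, hu, Finset.mul_sum]
    exact Finset.sum_congr rfl fun b _ => by ring
  set S := ∑ a, (u a) ^ 2 with hS
  set Y := ∑ b, (y b) ^ 2 with hY
  have hSnn : 0 ≤ S := Finset.sum_nonneg fun _ _ => sq_nonneg _
  have hYnn : 0 ≤ Y := Finset.sum_nonneg fun _ _ => sq_nonneg _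
  have h2 : S ≤ Real.sqrt S * Real.sqrt Y := by
    calc S = ∑ a, ∑ b, u a * y b * corr2 χ a b := h1
      _ ≤ |∑ a, ∑ b, u a * y b * corr2 χ a b| := le_abs_self _
      _ ≤ Real.sqrt S * Real.sqrt Y := corr2_bilinear χ hχ u y
  nlinarith [Real.sq_sqrt hSnn, Real.sq_sqrt hYnn, Real.sqrt_nonneg S,
    Real.sqrt_nonneg Y, sq_nonneg (Real.sqrt S - Real.sqrt Y)]


set_option maxHeartbeats 1000000 in
lemma contr_kron {I1 J1 I2 J2 : Type*} [Fintype I1] [Fintype J1] [Fintype I2] [Fintype J2]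
    (A : Matrix I1 J1 ℝ) (B : Matrix I2 J2 ℝ) (hA : Contr A) (hB : Contr B) :
    Contr (fun (r : I1 × I2) (c : J1 × J2) => A r.1 c.1 * B r.2 c.2) := by
  intro x
  calc ∑ p : I1 × I2, (∑ q : J1 × J2, A p.1 q.1 * B p.2 q.2 * x q) ^ 2
      = ∑ a, ∑ b, (∑ c, A a c * (∑ d, B b d * x (c, d))) ^ 2 := by
        rw [Fintype.sum_prod_type]
        refine Finset.sum_congr rfl fun a _ => Finset.sum_congr rfl fun b _ => ?_
        congr 1
        rw [Fintype.sum_prod_type]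
        refine Finset.sum_congr rfl fun c _ => ?_
        rw [Finset.mul_sum]
        exact Finset.sum_congr rfl fun d _ => by ring
    _ = ∑ b, ∑ a, (∑ c, A a c * (∑ d, B b d * x (c, d))) ^ 2 := Finset.sum_comm
    _ ≤ ∑ b, ∑ c, (∑ d, B b d * x (c, d)) ^ 2 :=
        Finset.sum_le_sum fun b _ => hA fun c => ∑ d, B b d * x (c, d)
    _ = ∑ c, ∑ b, (∑ d, B b d * x (c, d)) ^ 2 := Finset.sum_comm
    _ ≤ ∑ c, ∑ d, (x (c, d)) ^ 2 := by
        refine Finset.sum_le_sum fun c _ => ?_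
        exact hB fun d => x (c, d)
    _ = ∑ q : J1 × J2, (x q) ^ 2 := (Fintype.sum_prod_type fun q => (x q) ^ 2).symm

lemma contr_reindex {I J I' J' : Type*} [Fintype I] [Fintype J] [Fintype I'] [Fintype J']
    (K : Matrix I J ℝ) (hK : Contr K) (e : I' ≃ I) (f : J' ≃ J) :
    Contr (fun r c => K (e r) (f c)) := by
  intro x
  calc ∑ r, (∑ c, K (e r) (f c) * x c) ^ 2
      = ∑ i, (∑ q, K i q * x (f.symm q)) ^ 2 := by
        rw [← Equiv.sum_comp e fun i => (∑ q, K i q * x (f.symm q)) ^ 2]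
        refine Finset.sum_congr rfl fun r _ => ?_
        congr 1
        rw [← Equiv.sum_comp f fun q => K (e r) q * x (f.symm q)]
        simp
    _ ≤ ∑ q, (x (f.symm q)) ^ 2 := hK fun q => x (f.symm q)
    _ = ∑ c, (x c) ^ 2 := Equiv.sum_comp f.symm fun c => (x c) ^ 2

lemma sum_factor {α β : Type*} [Fintype α] [Fintype β] (F : α → α → ℂ) (G : β → β → ℂ) :
    ∑ p : α × β, ∑ q : α × β, F p.1 q.1 * G p.2 q.2
      = (∑ x, ∑ y, F x y) * (∑ x, ∑ y, G x y) := by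
  calc ∑ p : α × β, ∑ q : α × β, F p.1 q.1 * G p.2 q.2
      = ∑ p1, ∑ p2, ∑ q1, ∑ q2, F p1 q1 * G p2 q2 := by
        rw [Fintype.sum_prod_type]
        refine Finset.sum_congr rfl fun p1 _ => Finset.sum_congr rfl fun p2 _ => ?_
        rw [Fintype.sum_prod_type]
    _ = ∑ p1, ∑ p2, (∑ q1, F p1 q1) * (∑ q2, G p2 q2) := by
        refine Finset.sum_congr rfl fun p1 _ => Finset.sum_congr rfl fun p2 _ => ?_
        rw [Finset.sum_mul_sum]
    _ = (∑ x, ∑ y, F x y) * (∑ x, ∑ y, G x y) := by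
        rw [Finset.sum_mul_sum]

/-- If a pure 4-qubit state is a product across the 2-versus-2
bipartition `{j,m} | {l,s}` (with `j,l,m,s` the four distinct subsystems, up to
reordering of factors), then the crossing `{j,l}`-matricization of the full
correlation tensor satisfies `‖T_{{j,l}̲}‖_k ≤ k` for every `k ∈ {1,…,9}`. -/
theorem crossing_two_vs_two_product_four_qubit_matricization_bound
    (j l m s : Fin 4)
    (hjl : j ≠ l) (hjm : j ≠ m) (hjs : j ≠ s)
    (hlm : l ≠ m) (hls : l ≠ s) (hms : m ≠ s)
    (χ₁ χ₂ : Fin 2 × Fin 2 → ℂ)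
    (hχ₁ : ∑ x, Complex.normSq (χ₁ x) = 1)
    (hχ₂ : ∑ x, Complex.normSq (χ₂ x) = 1)
    (Ψ : (Fin 4 → Fin 2) → ℂ)
    (hprod : ∀ r, Ψ r = χ₁ (r j, r m) * χ₂ (r l, r s))
    (ρ : Matrix (Fin 4 → Fin 2) (Fin 4 → Fin 2) ℂ)
    (hρ : ρ = Matrix.vecMulVec Ψ (star Ψ)) :
    ∀ k : ℕ, 1 ≤ k → k ≤ 9 →
      kyFanNorm k (matricize {j, l} (corr ρ)) ≤ k := by
  intro k hk1 hk9
  clear hk1 hk9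
  -- the four indices enumerate `Fin 4`
  have huniv : ({j, m, l, s} : Finset (Fin 4)) = Finset.univ := by
    apply Finset.eq_univ_of_card
    rw [show ({j, m, l, s} : Finset (Fin 4)) = insert j (insert m (insert l {s})) from rfl,
      Finset.card_insert_of_notMem (by simp [hjm, hjl, hjs]),
      Finset.card_insert_of_notMem (by simp [Ne.symm hlm, hms]),
      Finset.card_insert_of_notMem (by simp [hls]),
      Finset.card_singleton]
    rfl
  have hcover : ∀ i : Fin 4, i = j ∨ i = m ∨ i = l ∨ i = s := by
    intro i
    have h := Finset.mem_univ i
    rw [← huniv] at h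
    simpa using h
  have hprod4 : ∀ g : Fin 4 → ℂ, ∏ q, g q = g j * g m * g l * g s := by
    intro g
    rw [← huniv,
      Finset.prod_insert (by simp [hjm, hjl, hjs]),
      Finset.prod_insert (by simp [Ne.symm hlm, hms]),
      Finset.prod_insert (by simp [hls]),
      Finset.prod_singleton]
    ring
  -- the reindexing equivalence for the Hilbert space
  let E : (Fin 4 → Fin 2) ≃ ((Fin 2 × Fin 2) × (Fin 2 × Fin 2)) :=
    { toFun := fun r => ((r j, r m), (r l, r s))
      invFun := fun p i =>
        if i = j then p.1.1 else if i = m then p.1.2 else if i = l then p.2.1 else p.2.2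
      left_inv := by
        intro r; funext i
        rcases hcover i with h | h | h | h <;> subst h <;>
          simp [Ne.symm hjm, Ne.symm hjl, Ne.symm hjs, hlm, Ne.symm hms, Ne.symm hls]
      right_inv := by
        intro p
        obtain ⟨⟨p1, p2⟩, p3, p4⟩ := p
        simp [Ne.symm hjm, Ne.symm hjl, Ne.symm hjs, hlm, Ne.symm hms, Ne.symm hls] }
  have hEj : ∀ p : ι2 × ι2, (E.symm p) j = p.1.1 := fun p =>
    congrArg (fun z => z.1.1) (E.apply_symm_apply p)
  have hEm : ∀ p : ι2 × ι2, (E.symm p) m = p.1.2 := fun p =>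
    congrArg (fun z => z.1.2) (E.apply_symm_apply p)
  have hEl : ∀ p : ι2 × ι2, (E.symm p) l = p.2.1 := fun p =>
    congrArg (fun z => z.2.1) (E.apply_symm_apply p)
  have hEs : ∀ p : ι2 × ι2, (E.symm p) s = p.2.2 := fun p =>
    congrArg (fun z => z.2.2) (E.apply_symm_apply p)
  -- trace factorization
  have htr : ∀ f : Fin 4 → Fin 3,
      corr ρ f = corr2 χ₁ (f j) (f m) * corr2 χ₂ (f l) (f s) := by
    intro f
    have key : (ρ * tensorOp fun q => pauli (f q)).trace
        = qf (kron (pauli (f j)) (pauli (f m))) χ₁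
          * qf (kron (pauli (f l)) (pauli (f s))) χ₂ := by
      set X := tensorOp fun q => pauli (f q) with hX
      have step1 : (ρ * X).trace
          = ∑ i, ∑ a, Ψ i * (starRingEnd ℂ) (Ψ a) * X a i := by
        rw [hρ]
        simp only [Matrix.trace, Matrix.diag, Matrix.mul_apply, Matrix.vecMulVec_apply,
          Pi.star_apply, Complex.star_def]
      have step2 : ∑ i, ∑ a, Ψ i * (starRingEnd ℂ) (Ψ a) * X a i
          = ∑ p : ι2 × ι2, ∑ q : ι2 × ι2,
              Ψ (E.symm p) * (starRingEnd ℂ) (Ψ (E.symm q)) * X (E.symm q) (E.symm p) := by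
        rw [← Equiv.sum_comp E.symm
          (fun i => ∑ a, Ψ i * (starRingEnd ℂ) (Ψ a) * X a i)]
        refine Finset.sum_congr rfl fun p _ => ?_
        rw [← Equiv.sum_comp E.symm
          (fun a => Ψ (E.symm p) * (starRingEnd ℂ) (Ψ a) * X a (E.symm p))]
      have step3 : ∑ p : ι2 × ι2, ∑ q : ι2 × ι2,
              Ψ (E.symm p) * (starRingEnd ℂ) (Ψ (E.symm q)) * X (E.symm q) (E.symm p)
          = ∑ p : ι2 × ι2, ∑ q : ι2 × ι2,
              (fun x y => χ₁ x * (starRingEnd ℂ) (χ₁ y)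
                * kron (pauli (f j)) (pauli (f m)) y x) p.1 q.1
              * (fun x y => χ₂ x * (starRingEnd ℂ) (χ₂ y)
                * kron (pauli (f l)) (pauli (f s)) y x) p.2 q.2 := by
        refine Finset.sum_congr rfl fun p _ => Finset.sum_congr rfl fun q _ => ?_
        rw [hprod, hprod, hX, tensorOp,
          hprod4 (fun t => pauli (f t) ((E.symm q) t) ((E.symm p) t)),
          hEj, hEm, hEl, hEs, hEj, hEm, hEl, hEs]
        simp only [_root_.map_mul, kron]
        ring
      rw [step1, step2, step3]
      exact sum_factor
        (fun x y => χ₁ x * (starRingEnd ℂ) (χ₁ y) * kron (pauli (f j)) (pauli (f m)) y x)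
        (fun x y => χ₂ x * (starRingEnd ℂ) (χ₂ y) * kron (pauli (f l)) (pauli (f s)) y x)
    rw [corr, key, corr2_complex, corr2_complex, ← Complex.ofReal_mul, Complex.ofReal_re]
  -- membership facts
  have hjmem : j ∈ ({j, l} : Finset (Fin 4)) := by simp
  have hlmem : l ∈ ({j, l} : Finset (Fin 4)) := by simp
  have hmnot : m ∉ ({j, l} : Finset (Fin 4)) := by simp [Ne.symm hjm, Ne.symm hlm]
  have hsnot : s ∉ ({j, l} : Finset (Fin 4)) := by simp [Ne.symm hjs, Ne.symm hls]
  -- entries of the matricization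
  have hM : ∀ (r : {q // q ∈ ({j, l} : Finset (Fin 4))} → Fin 3)
      (c : {q // q ∉ ({j, l} : Finset (Fin 4))} → Fin 3),
      matricize {j, l} (corr ρ) r c
        = corr2 χ₁ (r ⟨j, hjmem⟩) (c ⟨m, hmnot⟩)
          * corr2 χ₂ (r ⟨l, hlmem⟩) (c ⟨s, hsnot⟩) := by
    intro r c
    have h0 : matricize {j, l} (corr ρ) r c
        = corr ρ (fun q => if h : q ∈ ({j, l} : Finset (Fin 4)) then r ⟨q, h⟩ else c ⟨q, h⟩) :=
      rfl
    rw [h0, htr, dif_pos hjmem, dif_pos hlmem, dif_neg hmnot, dif_neg hsnot]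
  -- row and column reindexing equivalences
  let eR : ({q // q ∈ ({j, l} : Finset (Fin 4))} → Fin 3) ≃ (Fin 3 × Fin 3) :=
    { toFun := fun r => (r ⟨j, hjmem⟩, r ⟨l, hlmem⟩)
      invFun := fun p q => if (q : Fin 4) = j then p.1 else p.2
      left_inv := by
        intro r; funext q
        obtain ⟨v, hv⟩ := q
        rw [Finset.mem_insert, Finset.mem_singleton] at hv
        rcases hv with h | h <;> subst h <;> simp [Ne.symm hjl]
      right_inv := by
        intro p
        obtain ⟨p1, p2⟩ := p
        simp [Ne.symm hjl] }
  let eC : ({q // q ∉ ({j, l} : Finset (Fin 4))} → Fin 3) ≃ (Fin 3 × Fin 3) :=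
    { toFun := fun c => (c ⟨m, hmnot⟩, c ⟨s, hsnot⟩)
      invFun := fun p q => if (q : Fin 4) = m then p.1 else p.2
      left_inv := by
        intro c; funext q
        obtain ⟨v, hv⟩ := q
        have hv' := hv
        simp only [Finset.mem_insert, Finset.mem_singleton, not_or] at hv'
        rcases hcover v with h | h | h | h <;> subst h
        · exact absurd rfl hv'.1
        · simp
        · exact absurd rfl hv'.2
        · simp [Ne.symm hms]
      right_inv := by
        intro p
        obtain ⟨p1, p2⟩ := p
        simp [Ne.symm hms] }
  -- contraction
  have hContr : Contr (matricize {j, l} (corr ρ)) := by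
    have hKeq : matricize {j, l} (corr ρ)
        = fun r c => (fun (p q : Fin 3 × Fin 3) => corr2 χ₁ p.1 q.1 * corr2 χ₂ p.2 q.2)
            (eR r) (eC c) := by
      funext r c
      exact hM r c
    rw [hKeq]
    exact contr_reindex _ (contr_kron _ _ (corr2_contr χ₁ hχ₁) (corr2_contr χ₂ hχ₂)) eR eC
  exact kyFan_le _ hContr k
end
end
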